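/- arXiv:2012.10008 — 4 statements merged into one kernel-verified Lean document; each statement's English description precedes it below -/
import Mathlib

section
/- Let n, m, o be positive natural numbers, v : Fin m → ℝ with v j ≥ 0, c : Fin n → Fin o → ℝ with c i t ≥ 0, w : Fin m → Fin o → ℝ, α ≥ 0, and h : Fin n → Fin m → ℝ with h i j ≥ 0. For an assignment S : Finset (Fin n × Fin m), let A_j(S) = {i | (i, j) ∈ S} and define f(S) = ∑_{j} (v j * ∑_{t} min(w j t, ∑_{i ∈ A_j(S)} c i t) + α * ∑_{i ∈ A_j(S)} h i j). Then f is submodular: for all assignments X ⊆ Y and every pair e = (i, j) ∉ Y, f(X ∪ {e}) − f(X) ≥ f(Y ∪ {e}) − f(Y). -/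
open Finset

/-- The set of robots assigned to task `j` under assignment `S`. -/
def Assigned {n m : ℕ} (S : Finset (Fin n × Fin m)) (j : Fin m) : Finset (Fin n) :=
  Finset.univ.filter fun i => (i, j) ∈ S

/-- The team objective function. -/
def teamObj {n m o : ℕ} (v : Fin m → ℝ) (c : Fin n → Fin o → ℝ) (w : Fin m → Fin o → ℝ)
    (α : ℝ) (h : Fin n → Fin m → ℝ) (S : Finset (Fin n × Fin m)) : ℝ :=
  ∑ j, (v j * ∑ t, min (w j t) (∑ i ∈ Assigned S j, c i t)
        + α * ∑ i ∈ Assigned S j, h i j)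

lemma min_marginal (w b b' cc : ℝ) (hb : b ≤ b') (hcc : 0 ≤ cc) :
    min w (cc + b') - min w b' ≤ min w (cc + b) - min w b := by
  simp only [min_def]
  split_ifs <;> linarith

lemma Assigned_union {n m : ℕ} (S : Finset (Fin n × Fin m)) (i : Fin n) (j j' : Fin m) :
    Assigned (S ∪ {(i, j)}) j' =
      if j' = j then insert i (Assigned S j') else Assigned S j' := by
  ext a
  by_cases hj : j' = j
  · subst hj
    simp [Assigned, Prod.ext_iff, or_comm]
  · simp [Assigned, Prod.ext_iff, hj]

lemma not_mem_Assigned {n m : ℕ} {S : Finset (Fin n × Fin m)} {e : Fin n × Fin m}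
    (he : e ∉ S) : e.1 ∉ Assigned S e.2 := by
  simp [Assigned]
  simpa using he

lemma teamObj_marginal {n m o : ℕ} (v : Fin m → ℝ) (c : Fin n → Fin o → ℝ)
    (w : Fin m → Fin o → ℝ) (α : ℝ) (h : Fin n → Fin m → ℝ)
    (S : Finset (Fin n × Fin m)) (e : Fin n × Fin m) (he : e ∉ S) :
    teamObj v c w α h (S ∪ {e}) - teamObj v c w α h S =
      v e.2 * ∑ t, (min (w e.2 t) (c e.1 t + ∑ i ∈ Assigned S e.2, c i t)
        - min (w e.2 t) (∑ i ∈ Assigned S e.2, c i t)) + α * h e.1 e.2 := by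
  have hne : e.1 ∉ Assigned S e.2 := not_mem_Assigned he
  unfold teamObj
  rw [← Finset.sum_sub_distrib]
  rw [Finset.sum_eq_single e.2]
  · have : S ∪ {e} = S ∪ {(e.1, e.2)} := by simp
    rw [this, Assigned_union, if_pos rfl]
    simp only [Finset.sum_insert hne]
    rw [Finset.sum_sub_distrib]
    ring
  · intro j _ hj
    have : S ∪ {e} = S ∪ {(e.1, e.2)} := by simp
    rw [this, Assigned_union, if_neg hj]
    ring
  · simp

lemma Assigned_mono {n m : ℕ} {X Y : Finset (Fin n × Fin m)} (hXY : X ⊆ Y) (j : Fin m) :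
    Assigned X j ⊆ Assigned Y j := by
  intro a
  simp only [Assigned, Finset.mem_filter]
  exact fun ⟨h1, h2⟩ => ⟨h1, hXY h2⟩

theorem teamObj_submodular {n m o : ℕ} (hn : 0 < n) (hm : 0 < m) (ho : 0 < o)
    (v : Fin m → ℝ) (hv : ∀ j, 0 ≤ v j)
    (c : Fin n → Fin o → ℝ) (hc : ∀ i t, 0 ≤ c i t)
    (w : Fin m → Fin o → ℝ)
    (α : ℝ) (hα : 0 ≤ α)
    (h : Fin n → Fin m → ℝ) (hh : ∀ i j, 0 ≤ h i j) :
    ∀ X Y : Finset (Fin n × Fin m), X ⊆ Y → ∀ e ∉ Y,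
      teamObj v c w α h (Y ∪ {e}) - teamObj v c w α h Y ≤
        teamObj v c w α h (X ∪ {e}) - teamObj v c w α h X := by
  intro X Y hXY e heY
  have heX : e ∉ X := fun hx => heY (hXY hx)
  rw [teamObj_marginal v c w α h Y e heY, teamObj_marginal v c w α h X e heX]
  have hsum : ∀ t, (∑ i ∈ Assigned X e.2, c i t) ≤ ∑ i ∈ Assigned Y e.2, c i t := by
    intro t
    exact Finset.sum_le_sum_of_subset_of_nonneg (Assigned_mono hXY e.2)
      (fun i _ _ => hc i t)
  have h1 : (∑ t, (min (w e.2 t) (c e.1 t + ∑ i ∈ Assigned Y e.2, c i t)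
        - min (w e.2 t) (∑ i ∈ Assigned Y e.2, c i t))) ≤
      ∑ t, (min (w e.2 t) (c e.1 t + ∑ i ∈ Assigned X e.2, c i t)
        - min (w e.2 t) (∑ i ∈ Assigned X e.2, c i t)) :=
    Finset.sum_le_sum fun t _ => min_marginal _ _ _ _ (hsum t) (hc e.1 t)
  have h2 := mul_le_mul_of_nonneg_left h1 (hv e.2)
  linarith
end

section
/- Let n, m, o be positive natural numbers, v : Fin m → ℝ, c : Fin n → Fin o → ℝ with c i t ≥ 0, w : Fin m → Fin o → ℝ, α : ℝ, and h : Fin n → Fin m → ℝ. Define f(S) = ∑_{j} (v j * ∑_{t} min(w j t, ∑_{i ∈ A_j(S)} c i t) + α * ∑_{i ∈ A_j(S)} h i j) for assignments S : Finset (Fin n × Fin m), where A_j(S) = {i | (i, j) ∈ S}. Then for every assignment S and every pair (i, j') ∈ S, the loss from removing robot i from task j' equals the algorithm's loss formula: f(S) − f(S \ {(i,j')}) = v j' * ∑_{t} max(0, min((w j' t − ∑_{i' ∈ A_{j'}(S)} c i' t) + c i t, c i t)) + α * h i j'. -/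
open Finset

lemma scalar_min (a s c : ℝ) (hc : 0 ≤ c) :
    min a s - min a (s - c) = max 0 (min (a - s + c) c) := by
  rcases le_total a (s - c) with h1 | h1 <;> rcases le_total a s with h2 | h2 <;>
    simp [min_def, max_def] <;> split_ifs <;> linarith


theorem removal_loss_formula {n m o : ℕ} (hn : 0 < n) (hm : 0 < m) (ho : 0 < o)
    (v : Fin m → ℝ)
    (c : Fin n → Fin o → ℝ) (hc : ∀ i t, 0 ≤ c i t)
    (w : Fin m → Fin o → ℝ)
    (α : ℝ) (h : Fin n → Fin m → ℝ) :
    ∀ (S : Finset (Fin n × Fin m)) (i : Fin n) (j' : Fin m), (i, j') ∈ S →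
      teamObj v c w α h S - teamObj v c w α h (S \ {(i, j')}) =
        v j' * ∑ t, max 0
            (min ((w j' t - ∑ i' ∈ Assigned S j', c i' t) + c i t) (c i t))
          + α * h i j' := by
  intro S i j' hij
  set S' := S \ {(i, j')} with hS'
  have hAne : ∀ j, j ≠ j' → Assigned S' j = Assigned S j := by
    intro j hj
    ext x
    simp [Assigned, hS', Prod.ext_iff, hj]

  have hiA : i ∈ Assigned S j' := by simp [Assigned, hij]
  have hAeq : Assigned S' j' = (Assigned S j').erase i := by
    ext x
    simp [Assigned, hS', Prod.ext_iff]
    tauto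

  have hsum : ∀ (g : Fin n → ℝ),
      ∑ x ∈ Assigned S j', g x = (∑ x ∈ Assigned S' j', g x) + g i := by
    intro g
    rw [hAeq, Finset.sum_erase_add _ _ hiA]
  unfold teamObj
  rw [← Finset.sum_sub_distrib, Finset.sum_eq_single j']
  · rw [hsum (fun x => h x j')]
    have hterm : ∀ t, min (w j' t) (∑ i' ∈ Assigned S j', c i' t)
        - min (w j' t) (∑ i' ∈ Assigned S' j', c i' t)
        = max 0 (min ((w j' t - ∑ i' ∈ Assigned S j', c i' t) + c i t) (c i t)) := by
      intro t
      have : ∑ i' ∈ Assigned S' j', c i' t = (∑ i' ∈ Assigned S j', c i' t) - c i t := by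
        rw [hsum (fun x => c x t)]; ring
      rw [this, scalar_min _ _ _ (hc i t)]

    have : (∑ t, min (w j' t) (∑ i' ∈ Assigned S j', c i' t))
        - ∑ t, min (w j' t) (∑ i' ∈ Assigned S' j', c i' t)
        = ∑ t, max 0 (min ((w j' t - ∑ i' ∈ Assigned S j', c i' t) + c i t) (c i t)) := by
      rw [← Finset.sum_sub_distrib]
      exact Finset.sum_congr rfl fun t _ => hterm t
    linear_combination (v j') * this
  · intro j _ hj
    rw [hAne j hj]; ring
  · intro hj; exact absurd (Finset.mem_univ j') hj
end

section
/- Let V be a finite type and f : Finset V → ℝ a set function with f(∅) = 0 that is monotone (X ⊆ Y implies f(X) ≤ f(Y)) and submodular (for X ⊆ Y and e ∉ Y, f(X ∪ {e}) − f(X) ≥ f(Y ∪ {e}) − f(Y)). Let π : V → Fin n be a labeling (assigning to each robot-task pair its robot), and call a set S feasible if π is injective on S (each robot is used at most once). Suppose S* = {e_1, …, e_k} is produced greedily: writing S_0 = ∅ and S_l = {e_1, …, e_l}, each S_l is feasible, e_{l+1} attains the maximum of f(S_l ∪ {e}) − f(S_l) over all e ∉ S_l with S_l ∪ {e} feasible,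 and S_k is maximal feasible (no e ∉ S_k keeps S_k ∪ {e} feasible). Then f(S*) ≥ (1/2) * f(T) for every feasible set T. -/
open Finset

/-- A set of robot-task pairs is feasible if each robot is used at most once,
i.e. the robot-projection `π` is injective on it (a partition matroid constraint). -/
def Feasible {V : Type*} {n : ℕ} (π : V → Fin n) (S : Finset V) : Prop :=
  Set.InjOn π ↑S

/-- `greedySet e l = {e_1, …, e_l}`: the set of the first `l` greedily chosen elements. -/
def greedySet {V : Type*} [DecidableEq V] {k : ℕ} (e : Fin k → V) (l : ℕ) : Finset V :=
  (Finset.univ.filter fun i : Fin k => (i : ℕ) < l).image e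

lemma greedySet_zero {V : Type*} [DecidableEq V] {k : ℕ} (e : Fin k → V) :
    greedySet e 0 = ∅ := by
  simp [greedySet]

lemma greedySet_succ {V : Type*} [DecidableEq V] {k : ℕ} (e : Fin k → V) (l : ℕ) (hl : l < k) :
    greedySet e (l + 1) = insert (e ⟨l, hl⟩) (greedySet e l) := by
  unfold greedySet
  rw [← Finset.image_insert]
  congr 1
  ext i
  simp only [Finset.mem_filter, Finset.mem_univ, true_and, Finset.mem_insert, Fin.ext_iff]
  omega

lemma greedySet_mono {V : Type*} [DecidableEq V] {k : ℕ} (e : Fin k → V) {l m : ℕ} (h : l ≤ m) :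
    greedySet e l ⊆ greedySet e m := by
  apply Finset.image_subset_image
  intro i hi
  simp only [Finset.mem_filter, Finset.mem_univ, true_and] at *
  omega

lemma mem_greedySet {V : Type*} [DecidableEq V] {k : ℕ} (e : Fin k → V) (i : Fin k) :
    e i ∈ greedySet e k := by
  simp only [greedySet, Finset.mem_image, Finset.mem_filter, Finset.mem_univ, true_and]
  exact ⟨i, i.isLt, rfl⟩

lemma sub_union_bound {V : Type*} [DecidableEq V] (f : Finset V → ℝ)
    (hsub : ∀ X Y : Finset V, X ⊆ Y → ∀ x ∉ Y,
      f (Y ∪ {x}) - f Y ≤ f (X ∪ {x}) - f X)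
    (S : Finset V) (T : Finset V) :
    f (S ∪ T) - f S ≤ ∑ x ∈ T \ S, (f (insert x S) - f S) := by
  induction T using Finset.induction_on with
  | empty => simp
  | @insert a T ha ih =>
    by_cases haS : a ∈ S
    · rw [Finset.union_insert, Finset.insert_eq_self.2 (Finset.mem_union_left T haS),
        Finset.insert_sdiff_of_mem T haS]
      exact ih
    · have haST : a ∉ S ∪ T := by simp [haS, ha]
      have h1 : f ((S ∪ T) ∪ {a}) - f (S ∪ T) ≤ f (S ∪ {a}) - f S :=
        hsub S (S ∪ T) Finset.subset_union_left a haST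
      have e1 : S ∪ T ∪ {a} = insert a (S ∪ T) := by ext z; simp
      have e2 : S ∪ {a} = insert a S := by ext z; simp
      rw [e1, e2] at h1
      have h2 : (insert a T) \ S = insert a (T \ S) := Finset.insert_sdiff_of_notMem T haS
      rw [h2, Finset.sum_insert (by simp [ha]), Finset.union_insert]
      linarith

theorem greedy_half_optimal {V : Type*} [Fintype V] [DecidableEq V] {n : ℕ}
    (f : Finset V → ℝ)
    (hf0 : f ∅ = 0)
    (hmono : ∀ X Y : Finset V, X ⊆ Y → f X ≤ f Y)
    (hsub : ∀ X Y : Finset V, X ⊆ Y → ∀ x ∉ Y,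
      f (Y ∪ {x}) - f Y ≤ f (X ∪ {x}) - f X)
    (π : V → Fin n)
    (k : ℕ) (e : Fin k → V)
    -- every prefix of the greedy sequence is feasible
    (hfeas : ∀ l ≤ k, Feasible π (greedySet e l))
    -- each newly chosen element is indeed new
    (hnew : ∀ (l : ℕ) (hl : l < k), e ⟨l, hl⟩ ∉ greedySet e l)
    -- each greedy choice maximizes the marginal gain among feasible additions
    (hgreedy : ∀ (l : ℕ) (hl : l < k), ∀ x ∉ greedySet e l,
      Feasible π (insert x (greedySet e l)) →
      f (insert x (greedySet e l)) - f (greedySet e l) ≤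
        f (insert (e ⟨l, hl⟩) (greedySet e l)) - f (greedySet e l))
    -- the final greedy set is maximal feasible
    (hmax : ∀ x ∉ greedySet e k, ¬ Feasible π (insert x (greedySet e k))) :
    ∀ T : Finset V, Feasible π T →
      (1 / 2 : ℝ) * f T ≤ f (greedySet e k) := by
  intro T hT
  classical
  set S := greedySet e k with hS
  have hSfeas : Feasible π S := hfeas k le_rfl
  have mem_S : ∀ b ∈ S, ∃ i : Fin k, e i = b := by
    intro b hb
    rw [hS] at hb
    simp only [greedySet, Finset.mem_image, Finset.mem_filter, Finset.mem_univ, true_and] at hb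
    obtain ⟨i, -, hi⟩ := hb
    exact ⟨i, hi⟩
  -- exchange: every x ∈ T \ S collides with some greedy element
  have exch : ∀ x ∈ T \ S, ∃ i : Fin k, π x = π (e i) ∧ x ≠ e i := by
    intro x hx
    rw [Finset.mem_sdiff] at hx
    obtain ⟨hxT, hxS⟩ := hx
    have hnf := hmax x hxS
    by_contra hcon
    push_neg at hcon
    apply hnf
    intro a ha b hb hab
    simp only [Finset.coe_insert, Set.mem_insert_iff, Finset.mem_coe] at ha hb
    rcases ha with rfl | haS
    · rcases hb with rfl | hbS
      · rfl
      · obtain ⟨i, rfl⟩ := mem_S b hbS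
        exact hcon i hab
    · rcases hb with rfl | hbS
      · obtain ⟨i, rfl⟩ := mem_S a haS
        exact (hcon i hab.symm).symm
      · exact hSfeas haS hbS hab
  choose ι hι1 hι2 using exch
  set D : ℕ → ℝ := fun l => f (greedySet e (l + 1)) - f (greedySet e l) with hD
  have hDnonneg : ∀ l, 0 ≤ D l :=
    fun l => sub_nonneg.2 (hmono _ _ (greedySet_mono e (Nat.le_succ l)))
  -- key bound for each element of T \ S
  have key : ∀ x (hx : x ∈ T \ S), f (insert x S) - f S ≤ D ↑(ι x hx) := by
    intro x hx
    set i := ι x hx with hi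
    have hxS : x ∉ S := (Finset.mem_sdiff.1 hx).2
    have hxT : x ∈ T := (Finset.mem_sdiff.1 hx).1
    have hik : (i : ℕ) ≤ k := le_of_lt i.isLt
    have hsubset : greedySet e ↑i ⊆ S := hS ▸ greedySet_mono e hik
    have hxSi : x ∉ greedySet e ↑i := fun h => hxS (hsubset h)
    have heta : e ⟨(i : ℕ), i.isLt⟩ = e i := by congr
    have heiS : e i ∈ S := hS ▸ mem_greedySet e i
    have heinot : e i ∉ greedySet e ↑i := heta ▸ hnew ↑i i.isLt
    -- feasibility of adding x at step i
    have hfeasx : Feasible π (insert x (greedySet e ↑i)) := by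
      intro a ha b hb hab
      simp only [Finset.coe_insert, Set.mem_insert_iff, Finset.mem_coe] at ha hb
      rcases ha with ha | haS
      · rcases hb with hb | hbS
        · rw [ha, hb]
        · exfalso
          have h1 : π (e i) = π b := by rw [← hι1 x hx, ← ha]; exact hab
          have h2 : e i = b := hSfeas heiS (hsubset hbS) h1
          exact heinot (h2 ▸ hbS)
      · rcases hb with hb | hbS
        · exfalso
          have h1 : π (e i) = π a := by rw [← hι1 x hx, ← hb]; exact hab.symm
          have h2 : e i = a := hSfeas heiS (hsubset haS) h1
          exact heinot (h2 ▸ haS)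
        · exact hfeas ↑i hik haS hbS hab
    have step2 := hgreedy ↑i i.isLt x hxSi hfeasx
    rw [heta] at step2
    have step1 : f (insert x S) - f S ≤ f (insert x (greedySet e ↑i)) - f (greedySet e ↑i) := by
      have := hsub (greedySet e ↑i) S hsubset x hxS
      have e1 : S ∪ {x} = insert x S := by ext z; simp
      have e2 : greedySet e ↑i ∪ {x} = insert x (greedySet e ↑i) := by ext z; simp
      rwa [e1, e2] at this
    have step3 : f (insert (e i) (greedySet e ↑i)) - f (greedySet e ↑i) = D ↑i := by
      rw [hD]
      simp only
      rw [greedySet_succ e ↑i i.isLt, heta]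
    linarith
  -- assemble everything
  have hb1 : f T ≤ f (S ∪ T) := hmono _ _ Finset.subset_union_right
  have hb2 : f (S ∪ T) - f S ≤ ∑ x ∈ T \ S, (f (insert x S) - f S) :=
    sub_union_bound f hsub S T
  have hsum : ∑ x ∈ T \ S, (f (insert x S) - f S) ≤ f S := by
    rw [← Finset.sum_attach (T \ S) (fun x => f (insert x S) - f S)]
    have hle : ∑ x ∈ (T \ S).attach, (f (insert (x : V) S) - f S)
        ≤ ∑ x ∈ (T \ S).attach, D ↑(ι x.1 x.2) :=
      Finset.sum_le_sum (fun x _ => key x.1 x.2)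
    have hinj : ∀ a ∈ (T \ S).attach, ∀ b ∈ (T \ S).attach,
        ι a.1 a.2 = ι b.1 b.2 → a = b := by
      intro a _ b _ hab
      have h1 : π a.1 = π (e (ι a.1 a.2)) := hι1 a.1 a.2
      have h2 : π b.1 = π (e (ι b.1 b.2)) := hι1 b.1 b.2
      have hπ : π a.1 = π b.1 := by rw [h1, h2, hab]
      have haT : a.1 ∈ T := (Finset.mem_sdiff.1 a.2).1
      have hbT : b.1 ∈ T := (Finset.mem_sdiff.1 b.2).1
      exact Subtype.ext (hT haT hbT hπ)
    have himg0 := Finset.sum_image (s := (T \ S).attach)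
      (g := fun x : {y // y ∈ T \ S} => ι x.1 x.2) (f := fun i : Fin k => D (i : ℕ)) hinj
    have himg : ∑ x ∈ (T \ S).attach, D ↑(ι x.1 x.2)
        = ∑ i ∈ (T \ S).attach.image (fun x => ι x.1 x.2), D ↑i := himg0.symm
    have hext : ∑ i ∈ (T \ S).attach.image (fun x => ι x.1 x.2), D ↑i
        ≤ ∑ i : Fin k, D ↑i :=
      Finset.sum_le_sum_of_subset_of_nonneg (Finset.subset_univ _)
        (fun i _ _ => hDnonneg ↑i)
    have htel : ∑ i : Fin k, D ↑i = f S := by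
      rw [Fin.sum_univ_eq_sum_range (fun l => D l) k, hD]
      simp only
      rw [Finset.sum_range_sub (fun l => f (greedySet e l)) k]
      rw [greedySet_zero, hf0, hS]
      ring
    linarith
  linarith
end

section
/- Let x_i, x_j : ℝ → EuclideanSpace ℝ (Fin 2) be differentiable trajectories of two robots, R_c ≥ 0 a communication range, and γ : ℝ. Define the barrier function h : ℝ → ℝ by h(t) = R_c^2 − ‖x_i(t) − x_j(t)‖^2. If ‖x_i(0) − x_j(0)‖ ≤ R_c and for all t ≥ 0 one has deriv h t + γ * h t ≥ 0, then ‖x_i(t) − x_j(t)‖ ≤ R_c for all t ≥ 0, i.e., the communication link between robots i and j is maintained for all forward time. -/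
/-- The pairwise connectivity barrier function `h(t) = R_c² − ‖x_i(t) − x_j(t)‖²`. -/
noncomputable def barrier (xi xj : ℝ → EuclideanSpace ℝ (Fin 2)) (Rc : ℝ) (t : ℝ) : ℝ :=
  Rc ^ 2 - ‖xi t - xj t‖ ^ 2

theorem connectivity_forward_invariant
    (xi xj : ℝ → EuclideanSpace ℝ (Fin 2))
    (hxi : Differentiable ℝ xi) (hxj : Differentiable ℝ xj)
    (Rc : ℝ) (hRc : 0 ≤ Rc) (γ : ℝ)
    (h0 : ‖xi 0 - xj 0‖ ≤ Rc)
    (hbar : ∀ t ≥ (0 : ℝ),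
      deriv (barrier xi xj Rc) t + γ * barrier xi xj Rc t ≥ 0) :
    ∀ t ≥ (0 : ℝ), ‖xi t - xj t‖ ≤ Rc := by
  have hd : Differentiable ℝ (fun t => xi t - xj t) := hxi.sub hxj
  have hsq : Differentiable ℝ (fun t => ‖xi t - xj t‖ ^ 2) := by
    have heq : (fun t => ‖xi t - xj t‖ ^ 2)
        = fun t => (inner ℝ (xi t - xj t) (xi t - xj t) : ℝ) :=
      funext fun t => (real_inner_self_eq_norm_sq _).symm
    rw [heq]
    exact hd.inner ℝ hd
  have hb : Differentiable ℝ (barrier xi xj Rc) := by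
    unfold barrier
    exact (differentiable_const _).sub hsq
  set h := barrier xi xj Rc with hhdef
  set g : ℝ → ℝ := fun t => Real.exp (γ * t) * h t with hgdef
  have hg : Differentiable ℝ g := by
    exact ((Real.differentiable_exp.comp ((differentiable_id.const_mul γ))).mul hb)
  have hg' : ∀ t, deriv g t = Real.exp (γ * t) * (deriv h t + γ * h t) := by
    intro t
    have h1 : HasDerivAt (fun t => Real.exp (γ * t)) (γ * Real.exp (γ * t)) t := by
      have := (Real.hasDerivAt_exp (γ * t)).comp t ((hasDerivAt_id t).const_mul γ)
      simpa [mul_comm, Function.comp_def] using this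
    have h2 : HasDerivAt h (deriv h t) t := (hb t).hasDerivAt
    have := h1.mul h2
    rw [show g = (fun t => Real.exp (γ * t)) * h from rfl, this.deriv]
    ring
  have hmono : MonotoneOn g (Set.Ici (0 : ℝ)) := by
    apply monotoneOn_of_deriv_nonneg (convex_Ici 0) hg.continuous.continuousOn
      (fun t _ => (hg t).differentiableWithinAt)
    intro t ht
    rw [interior_Ici, Set.mem_Ioi] at ht
    rw [hg' t]
    exact mul_nonneg (Real.exp_pos _).le (hbar t ht.le)
  have h00 : 0 ≤ h 0 := by
    have : ‖xi 0 - xj 0‖ ^ 2 ≤ Rc ^ 2 := by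
      exact pow_le_pow_left₀ (norm_nonneg _) h0 2
    simpa [hhdef, barrier] using this
  intro t ht
  have hgt : g 0 ≤ g t := hmono (Set.self_mem_Ici) (Set.mem_Ici.mpr ht) ht
  have hg0 : g 0 = h 0 := by simp [hgdef]
  have hht : 0 ≤ h t := by
    have hgt0 : (0:ℝ) ≤ g t := le_trans (hg0 ▸ h00) hgt
    have hep := Real.exp_pos (γ * t)
    have hgt0' : (0:ℝ) ≤ Real.exp (γ * t) * h t := by simpa [hgdef] using hgt0
    exact (mul_nonneg_iff_of_pos_left hep).mp hgt0'

  have hsqle : ‖xi t - xj t‖ ^ 2 ≤ Rc ^ 2 := by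
    have := hht
    simp only [hhdef, barrier] at this
    linarith
  nlinarith [norm_nonneg (xi t - xj t)]
end
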